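/- (Bias extension) In the fully connected network with bias parameters, the BP bias update Δv^{l+1}_i = −α ∂E/∂v^{l+1}_i equals α·δ^l_i, and in the corresponding PCN the IL bias update Δβ^{l+1}_i = −α ∂F/∂β^{l+1}_i equals α·ε^l_i; consequently under the Z-IL conditions (γ = 1, ε^l_{i,0} = 0 for l > 0, identical weight and bias initialization) the bias updates of Z-IL and BP coincide: Δβ^{l+1}_i = Δv^{l+1}_i. -/

import Mathlib

/-- Feedforward propagation with biases from layer `l` down to layer `0`:
`y^l_i = ∑_j w^{l+1}_{i,j} f(y^{l+1}_j) + v^{l+1}_i`. -/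
noncomputable def downB (n : ℕ → ℕ) (w : ℕ → ℕ → ℕ → ℝ) (v : ℕ → ℕ → ℝ) (f : ℝ → ℝ) :
    ℕ → (ℕ → ℝ) → ℕ → ℝ
  | 0, vec => vec
  | l + 1, vec => downB n w v f l
      (fun i => (∑ j ∈ Finset.range (n (l + 1)), w (l + 1) i j * f (vec j)) + v (l + 1) i)

/-- The BP objective `E = (1/2) ∑_i (s^out_i - y^0_i)^2`. -/
noncomputable def Eobj (n0 : ℕ) (sOut v : ℕ → ℝ) : ℝ :=
  (1 / 2) * ∑ i ∈ Finset.range n0, (sOut i - v i) ^ 2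

/-- PCN prediction with bias: `μ^l_i = ∑_j θ^{l+1}_{i,j} f(x^{l+1}_j) + β^{l+1}_i`. -/
noncomputable def muB (n : ℕ → ℕ) (θ : ℕ → ℕ → ℕ → ℝ) (β : ℕ → ℕ → ℝ) (f : ℝ → ℝ)
    (x : ℕ → ℕ → ℝ) (l i : ℕ) : ℝ :=
  (∑ j ∈ Finset.range (n (l + 1)), θ (l + 1) i j * f (x (l + 1) j)) + β (l + 1) i

/-- PCN free energy with biases. -/
noncomputable def FB (L : ℕ) (n : ℕ → ℕ) (θ : ℕ → ℕ → ℕ → ℝ) (β : ℕ → ℕ → ℝ)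
    (f : ℝ → ℝ) (x : ℕ → ℕ → ℝ) : ℝ :=
  ∑ l ∈ Finset.range L, ∑ i ∈ Finset.range (n l),
    (1 / 2) * (x l i - muB n θ β f x l i) ^ 2

lemma keyDeriv (L : ℕ) (n : ℕ → ℕ) (θ : ℕ → ℕ → ℕ → ℝ) (β : ℕ → ℕ → ℝ)
    (f : ℝ → ℝ) (hf : Differentiable ℝ f) (sOut : ℕ → ℝ)
    (y : ℕ → ℕ → ℝ)
    (hyRec : ∀ l < L, ∀ i,
      y l i = (∑ j ∈ Finset.range (n (l + 1)), θ (l + 1) i j * f (y (l + 1) j)) + β (l + 1) i)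
    (δ : ℕ → ℕ → ℝ)
    (hδ0 : ∀ i, δ 0 i = sOut i - y 0 i)
    (hδS : ∀ l, 0 < l → l < L → ∀ i,
      δ l i = deriv f (y l i) * ∑ k ∈ Finset.range (n (l - 1)), δ (l - 1) k * θ l k i) :
    ∀ l, l < L → ∀ (v : ℝ → ℕ → ℝ) (d : ℕ → ℝ) (t₀ : ℝ),
      (∀ j, v t₀ j = y l j) → (∀ j, HasDerivAt (fun t => v t j) (d j) t₀) →
      HasDerivAt (fun t => Eobj (n 0) sOut (downB n θ β f l (v t)))
        (-(∑ j ∈ Finset.range (n l), δ l j * d j)) t₀ := by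
  intro l
  induction l with
  | zero =>
    intro _ v d t₀ hv0 hv
    have h : HasDerivAt (fun t => ∑ j ∈ Finset.range (n 0), (sOut j - v t j) ^ 2)
        (∑ j ∈ Finset.range (n 0), ((2 : ℕ) * (sOut j - v t₀ j) ^ (2 - 1) * (-(d j)))) t₀ :=
      HasDerivAt.fun_sum fun j _ => ((hv j).const_sub (sOut j)).pow 2
    have h2 := h.const_mul ((1 : ℝ) / 2)
    have hval : -(∑ j ∈ Finset.range (n 0), δ 0 j * d j)
        = (1 / 2 : ℝ) * ∑ j ∈ Finset.range (n 0),
            (((2 : ℕ) : ℝ) * (sOut j - v t₀ j) ^ (2 - 1) * (-(d j))) := by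
      rw [Finset.mul_sum, ← Finset.sum_neg_distrib]
      exact Finset.sum_congr rfl fun j _ => by rw [hδ0 j, hv0 j]; push_cast; ring
    simp only [Eobj, downB]
    rw [hval]
    exact h2
  | succ l ih =>
    intro hl v d t₀ hv0 hv
    have hlL : l < L := Nat.lt_of_succ_lt hl
    have hW : ∀ k, HasDerivAt
        (fun t => (∑ j ∈ Finset.range (n (l + 1)), θ (l + 1) k j * f (v t j)) + β (l + 1) k)
        (∑ j ∈ Finset.range (n (l + 1)), θ (l + 1) k j * (deriv f (y (l + 1) j) * d j)) t₀ := by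
      intro k
      refine HasDerivAt.add_const _ ?_
      refine HasDerivAt.fun_sum fun j _ => ?_
      have hfj : HasDerivAt (fun t => f (v t j)) (deriv f (y (l + 1) j) * d j) t₀ := by
        have := ((hf (v t₀ j)).hasDerivAt).comp t₀ (hv j)
        rwa [hv0 j] at this
      exact hfj.const_mul (θ (l + 1) k j)
    have hW0 : ∀ k, (fun t k => (∑ j ∈ Finset.range (n (l + 1)), θ (l + 1) k j * f (v t j))
        + β (l + 1) k) t₀ k = y l k := by
      intro k
      rw [hyRec l hlL k]
      simp only [hv0]
    have key := ih hlL
      (fun t k => (∑ j ∈ Finset.range (n (l + 1)), θ (l + 1) k j * f (v t j)) + β (l + 1) k)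
      (fun k => ∑ j ∈ Finset.range (n (l + 1)), θ (l + 1) k j * (deriv f (y (l + 1) j) * d j))
      t₀ hW0 hW
    have hval : (∑ j ∈ Finset.range (n (l + 1)), δ (l + 1) j * d j)
        = ∑ k ∈ Finset.range (n l), δ l k *
            (∑ j ∈ Finset.range (n (l + 1)), θ (l + 1) k j * (deriv f (y (l + 1) j) * d j)) := by
      simp only [Finset.mul_sum]
      rw [Finset.sum_comm]
      refine Finset.sum_congr rfl fun j _ => ?_
      rw [hδS (l + 1) (Nat.succ_pos l) hl j]
      simp only [Nat.add_sub_cancel]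
      rw [Finset.mul_sum, Finset.sum_mul]
      exact Finset.sum_congr rfl fun k _ => by ring
    simp only [downB]
    rw [hval]
    exact key

/-- bias extension: in the fully connected network with biases, the BP
bias update `Δv^{l+1}_i = −α ∂E/∂v^{l+1}_i` equals `α δ^l_i`; in the corresponding PCN
the IL bias update `Δβ^{l+1}_i = −α ∂F/∂β^{l+1}_i` equals `α ε^l_i`; and under the Z-IL
conditions (`γ = 1`, `ε^l_{i,0} = 0` for `l > 0`, identical weight and bias
initialization) the bias updates of Z-IL and BP coincide:
`Δβ^{l+1}_i = α ε^l_{i,l} = α δ^l_i = Δv^{l+1}_i`. -/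
theorem bias_extension
    (L : ℕ) (hL : 0 < L) (n : ℕ → ℕ) (θ : ℕ → ℕ → ℕ → ℝ) (β : ℕ → ℕ → ℝ)
    (f : ℝ → ℝ) (hf : Differentiable ℝ f)
    (sIn sOut : ℕ → ℝ) (α γ : ℝ) (hγ : γ = 1)
    -- the ANN (identical weights `θ` and biases `β`)
    (y : ℕ → ℕ → ℝ)
    (hyL : ∀ i, y L i = sIn i)
    (hyRec : ∀ l < L, ∀ i,
      y l i = (∑ j ∈ Finset.range (n (l + 1)), θ (l + 1) i j * f (y (l + 1) j)) + β (l + 1) i)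
    (δ : ℕ → ℕ → ℝ)
    (hδ0 : ∀ i, δ 0 i = sOut i - y 0 i)
    (hδS : ∀ l, 0 < l → l < L → ∀ i,
      δ l i = deriv f (y l i) * ∑ k ∈ Finset.range (n (l - 1)), δ (l - 1) k * θ l k i)
    -- the PCN trajectory trained with Z-IL
    (X : ℕ → ℕ → ℕ → ℝ)
    (hclampIn : ∀ t i, X t L i = sIn i)
    (hclampOut : ∀ t i, X t 0 i = sOut i)
    (hdyn : ∀ t, ∀ l, 0 < l → l < L → ∀ i,
      X (t + 1) l i = X t l i + γ *
        (-(X t l i - muB n θ β f (X t) l i) +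
          deriv f (X t l i) *
            ∑ k ∈ Finset.range (n (l - 1)),
              (X t (l - 1) k - muB n θ β f (X t) (l - 1) k) * θ l k i))
    (hinit : ∀ l, 1 ≤ l → l ≤ L - 1 → ∀ i, X 0 l i = muB n θ β f (X 0) l i) :
    -- (a) BP bias update: −α ∂E/∂v^{l+1}_i = α δ^l_i
    (∀ l ≤ L - 1, ∀ i < n l,
      -α * deriv (fun c => Eobj (n 0) sOut (downB n θ β f l (fun i' =>
          (∑ j ∈ Finset.range (n (l + 1)), θ (l + 1) i' j * f (y (l + 1) j)) +
            (if i' = i then c else β (l + 1) i')))) (β (l + 1) i)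
        = α * δ l i) ∧
    -- (b) IL bias update: −α ∂F/∂β^{l+1}_i = α ε^l_i
    (∀ x : ℕ → ℕ → ℝ, ∀ l < L, ∀ i < n l,
      -α * deriv (fun c => FB L n θ
          (fun l' i' => if l' = l + 1 ∧ i' = i then c else β l' i') f x) (β (l + 1) i)
        = α * (x l i - muB n θ β f x l i)) ∧
    -- (c) Z-IL bias update equals BP bias update
    (∀ l ≤ L - 1, ∀ i, α * (X l l i - muB n θ β f (X l) l i) = α * δ l i) := by
  have muB_eq_y : ∀ (Z : ℕ → ℕ → ℝ) (l : ℕ), l < L → (∀ j, Z (l + 1) j = y (l + 1) j) →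
      ∀ i, muB n θ β f Z l i = y l i := by
    intro Z l hlL hZ i
    rw [hyRec l hlL i]
    simp only [muB, hZ]
  have muB_congr : ∀ (Z Z' : ℕ → ℕ → ℝ) (l : ℕ), (∀ j, Z (l + 1) j = Z' (l + 1) j) →
      ∀ i, muB n θ β f Z l i = muB n θ β f Z' l i := by
    intro Z Z' l hZ i
    simp only [muB, hZ]
  refine ⟨?_, ?_, ?_⟩
  · -- (a)
    intro l hl i hi
    have hlL : l < L := by omega
    have key := keyDeriv L n θ β f hf sOut y hyRec δ hδ0 hδS l hlL
      (fun c i' => (∑ j ∈ Finset.range (n (l + 1)), θ (l + 1) i' j * f (y (l + 1) j)) +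
        (if i' = i then c else β (l + 1) i'))
      (fun j => if j = i then 1 else 0) (β (l + 1) i)
      (fun i' => by
        rw [hyRec l hlL i']
        by_cases h : i' = i
        · subst h; simp
        · simp [h])
      (fun j => by
        by_cases h : j = i
        · subst h
          simp only [if_pos rfl]
          exact (hasDerivAt_id _).const_add _
        · simp only [if_neg h]
          exact hasDerivAt_const _ _)
    have hval : (∑ j ∈ Finset.range (n l), δ l j * (if j = i then 1 else 0)) = δ l i := by
      simp only [mul_ite, mul_one, mul_zero]
      exact Finset.sum_ite_eq' (Finset.range (n l)) i (δ l) |>.trans (by simp [hi])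
    rw [hval] at key
    rw [key.deriv]
    ring
  · -- (b)
    intro x l hlL i hi
    set c₀ := β (l + 1) i with hc₀
    have hterm : ∀ l' i', HasDerivAt
        (fun c => (1 / 2 : ℝ) * (x l' i' -
          muB n θ (fun a b => if a = l + 1 ∧ b = i then c else β a b) f x l' i') ^ 2)
        (if l' = l ∧ i' = i then -(x l i - muB n θ β f x l i) else 0) c₀ := by
      intro l' i'
      by_cases h : l' = l ∧ i' = i
      · obtain ⟨rfl, rfl⟩ := h
        have hfun : (fun c => (1 / 2 : ℝ) * (x l' i' -
            muB n θ (fun a b => if a = l' + 1 ∧ b = i' then c else β a b) f x l' i') ^ 2)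
            = (fun c => (1 / 2 : ℝ) * (x l' i' -
              ((∑ j ∈ Finset.range (n (l' + 1)), θ (l' + 1) i' j * f (x (l' + 1) j))
                + id c)) ^ 2) := by
          funext c
          simp [muB]
        rw [if_pos (⟨rfl, rfl⟩ : l' = l' ∧ i' = i'), hfun]
        have h2 := ((((hasDerivAt_id c₀).const_add (∑ j ∈ Finset.range (n (l' + 1)),
          θ (l' + 1) i' j * f (x (l' + 1) j))).const_sub (x l' i')).fun_pow 2).const_mul
          ((1 : ℝ) / 2)
        convert h2 using 1
        · rfl
        · rfl
        simp only [muB, hc₀, id_eq, pow_one]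
        push_cast
        ring
      · have hcond : ¬(l' + 1 = l + 1 ∧ i' = i) := by
          rintro ⟨h1, h2⟩
          exact h ⟨Nat.succ_injective h1, h2⟩
        simp only [muB, if_neg hcond, if_neg h]
        exact hasDerivAt_const _ _
    have hsum : HasDerivAt
        (fun c => FB L n θ (fun l' i' => if l' = l + 1 ∧ i' = i then c else β l' i') f x)
        (∑ l' ∈ Finset.range L, ∑ i' ∈ Finset.range (n l'),
          if l' = l ∧ i' = i then -(x l i - muB n θ β f x l i) else 0) c₀ := by
      simp only [FB]
      exact HasDerivAt.fun_sum fun l' _ => HasDerivAt.fun_sum fun i' _ => hterm l' i'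
    have hval : (∑ l' ∈ Finset.range L, ∑ i' ∈ Finset.range (n l'),
        if l' = l ∧ i' = i then -(x l i - muB n θ β f x l i) else 0)
        = -(x l i - muB n θ β f x l i) := by
      rw [Finset.sum_eq_single_of_mem l (Finset.mem_range.mpr hlL)]
      · rw [Finset.sum_eq_single_of_mem i (Finset.mem_range.mpr hi)]
        · simp
        · intro b _ hb; simp [hb]
      · intro b _ hb
        apply Finset.sum_eq_zero
        intro i' _
        simp [hb]
    rw [hval] at hsum
    rw [hsum.deriv]
    ring
  · -- (c)
    intro l hl i
    have initAux : ∀ m, ∀ l', l' = L - m → 1 ≤ l' → ∀ i', X 0 l' i' = y l' i' := by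
      intro m
      induction m with
      | zero =>
        intro l' hl' _ i'
        have : l' = L := by omega
        subst this
        rw [hclampIn, hyL]
      | succ m ih =>
        intro l' hl' h1 i'
        have hm1 : m + 1 < L := by omega
        have hl'lt : l' < L := by omega
        have hstep : l' + 1 = L - m := by omega
        have hX : ∀ j, X 0 (l' + 1) j = y (l' + 1) j := fun j =>
          ih (l' + 1) hstep (by omega) j
        rw [hinit l' h1 (by omega) i']
        exact muB_eq_y (X 0) l' hl'lt hX i'
    have init : ∀ l', 1 ≤ l' → l' ≤ L → ∀ i', X 0 l' i' = y l' i' := by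
      intro l' h1 h2 i'
      exact initAux (L - l') l' (by omega) h1 i'
    have inv : ∀ t, (∀ l', t + 1 ≤ l' → l' ≤ L → ∀ i', X t l' i' = y l' i') ∧
        (∀ l', t + 1 ≤ l' → l' + 1 ≤ L → ∀ i', X t l' i' = muB n θ β f (X t) l' i') ∧
        (t + 1 ≤ L → ∀ i', X t t i' - muB n θ β f (X t) t i' = δ t i') := by
      intro t
      induction t with
      | zero =>
        refine ⟨fun l' h1 h2 i' => init l' h1 h2 i', fun l' h1 h2 i' =>
          hinit l' h1 (by omega) i', fun _ i' => ?_⟩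
        have hmu : muB n θ β f (X 0) 0 i' = y 0 i' :=
          muB_eq_y (X 0) 0 hL (fun j => init 1 le_rfl hL j) i'
        rw [hclampOut, hmu, hδ0]
      | succ t ih =>
        obtain ⟨A, B, C⟩ := ih
        have A' : ∀ l', t + 2 ≤ l' → l' ≤ L → ∀ i', X (t + 1) l' i' = y l' i' := by
          intro l' h1 h2 i'
          rcases eq_or_lt_of_le h2 with hEq | hlt
          · subst hEq; rw [hclampIn, hyL]
          · have h0 : 0 < l' := by omega
            rw [hdyn t l' h0 hlt i', hγ]
            have e1 : X t l' i' - muB n θ β f (X t) l' i' = 0 := by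
              rw [B l' (by omega) (by omega) i']; ring
            have e2 : (∑ k ∈ Finset.range (n (l' - 1)),
                (X t (l' - 1) k - muB n θ β f (X t) (l' - 1) k) * θ l' k i') = 0 := by
              apply Finset.sum_eq_zero
              intro k _
              rw [B (l' - 1) (by omega) (by omega) k]
              ring
            rw [e1, e2, A l' (by omega) (by omega) i']
            ring
        refine ⟨A', ?_, ?_⟩
        · intro l' h1 h2 i'
          rw [A' l' h1 (by omega) i']
          have hXn : ∀ j, X (t + 1) (l' + 1) j = y (l' + 1) j := fun j =>
            A' (l' + 1) (by omega) (by omega) j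
          rw [muB_eq_y (X (t + 1)) l' (by omega) hXn i']
        · intro ht i'
          have h0 : 0 < t + 1 := Nat.succ_pos t
          have hlt : t + 1 < L := by omega
          have hA1 : X t (t + 1) i' = y (t + 1) i' := A (t + 1) le_rfl (by omega) i'
          have e1 : X t (t + 1) i' - muB n θ β f (X t) (t + 1) i' = 0 := by
            rw [B (t + 1) le_rfl (by omega) i']; ring
          have hmueq : muB n θ β f (X (t + 1)) (t + 1) i' = muB n θ β f (X t) (t + 1) i' := by
            refine muB_congr _ _ _ (fun j => ?_) i'
            rw [A' (t + 2) le_rfl (by omega) j, A (t + 2) (by omega) (by omega) j]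
          have hmuy : muB n θ β f (X t) (t + 1) i' = y (t + 1) i' := by
            have h := sub_eq_zero.mp e1
            rw [← h, hA1]
          have e2 : (∑ k ∈ Finset.range (n t),
              (X t t k - muB n θ β f (X t) t k) * θ (t + 1) k i')
              = ∑ k ∈ Finset.range (n t), δ t k * θ (t + 1) k i' := by
            refine Finset.sum_congr rfl fun k _ => ?_
            rw [C (by omega) k]
          rw [hdyn t (t + 1) h0 hlt i', hγ]
          simp only [Nat.add_sub_cancel]
          rw [e2, hmueq, hA1, hmuy, hδS (t + 1) h0 hlt i']
          simp only [Nat.add_sub_cancel]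
          ring
    have := (inv l).2.2 (by omega) i
    rw [this]
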